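/- Let G be a finite graph, μ a mass on G, and let X₁,…,X_n be the vertex sets of the connected components of G[Y] for some Y ⊆ V(G). If (G, μ) is ε-coherent and μ(Y) ≥ 3ε, then there exists an index i with μ(X_i) ≥ ε and μ(Y ∖ X_i) < ε. -/

import Mathlib

open scoped Classical

/-- Two vertex sets are anticomplete: no edge of `G` joins them. -/
def Anticomplete {V : Type*} (G : SimpleGraph V) (A B : Finset V) : Prop :=
  ∀ a ∈ A, ∀ b ∈ B, ¬ G.Adj a b

/-- `X` induces a connected subgraph of `G`. -/
def ConnSub {V : Type*} (G : SimpleGraph V) (X : Finset V) : Prop :=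
  (G.induce (X : Set V)).Connected

/-- `A` covers `B`: every vertex of `B` has a neighbour in `A`. -/
def Covers {V : Type*} (G : SimpleGraph V) (A B : Finset V) : Prop :=
  ∀ b ∈ B, ∃ a ∈ A, G.Adj a b

/-- `μ` is a mass on the (finite) vertex set. -/
def IsMass {V : Type*} [Fintype V] [DecidableEq V] (μ : Finset V → ℝ) : Prop :=
  μ ∅ = 0 ∧ μ Finset.univ = 1 ∧ (∀ X Y : Finset V, X ⊆ Y → μ X ≤ μ Y) ∧
    ∀ X Y : Finset V, Disjoint X Y → μ (X ∪ Y) ≤ μ X + μ Y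

/-- The massed graph `(G, μ)` is ε-coherent. -/
noncomputable def MassCoherent {V : Type*} [Fintype V] [DecidableEq V] (G : SimpleGraph V)
    (μ : Finset V → ℝ) (ε : ℝ) : Prop :=
  (∀ v : V, μ {v} < ε) ∧ (∀ v : V, μ (G.neighborSet v).toFinset < ε) ∧
    ∀ A B : Finset V, Disjoint A B → Anticomplete G A B → min (μ A) (μ B) < ε

private lemma reach_of_walk {V : Type*} {G : SimpleGraph V} {S : Set V} :
    ∀ {a b : V} (p : G.Walk a b), (∀ w ∈ p.support, w ∈ S) →
    ∀ (ha : a ∈ S) (hb : b ∈ S), (G.induce S).Reachable ⟨a, ha⟩ ⟨b, hb⟩ := by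
  intro a b p
  induction p with
  | nil => intro _ ha hb; rfl
  | @cons u x b h q ih =>
    intro hsup ha hb
    have hx : x ∈ S := hsup _ (by simp)
    exact ((show (G.induce S).Adj ⟨u, ha⟩ ⟨x, hx⟩ by simpa using h)).reachable.trans
      (ih (fun w hw => hsup w (by simp [hw])) hx hb)

private lemma support_mk {V : Type*} {G : SimpleGraph V} :
    ∀ {a b : V} (p : G.Walk a b), ∀ w ∈ p.support,
      G.connectedComponentMk w = G.connectedComponentMk a := by
  intro a b p
  induction p with
  | nil => intro w hw; simp at hw; subst hw; rfl
  | @cons u x b h q ih =>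
    intro w hw
    rcases (by simpa using hw : w = u ∨ w ∈ q.support) with rfl | hw
    · rfl
    · exact (ih w hw).trans (SimpleGraph.ConnectedComponent.sound h.symm.reachable)

theorem stmt_17 {V : Type*} [Fintype V] [DecidableEq V] (G : SimpleGraph V)
    (μ : Finset V → ℝ) (hμ : IsMass μ) (ε : ℝ) (hε : 0 < ε)
    (hcoh : MassCoherent G μ ε) (Y : Finset V) (hY : 3 * ε ≤ μ Y) :
    ∃ X ⊆ Y, X.Nonempty ∧ ConnSub G X ∧ Anticomplete G X (Y \ X) ∧
      ε ≤ μ X ∧ μ (Y \ X) < ε := by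
  classical
  obtain ⟨h0, h1, hmono, hsub⟩ := hμ
  obtain ⟨hsing, hnbr, hanti⟩ := hcoh
  set S : Set V := (Y : Set V) with hSdef
  set H : SimpleGraph S := G.induce S with hHdef
  set X : H.ConnectedComponent → Finset V :=
    fun c => Y.filter (fun w => ∃ h : w ∈ S, H.connectedComponentMk ⟨w, h⟩ = c) with hXdef
  have hmemX : ∀ (c) (w : V), w ∈ X c ↔ ∃ h : w ∈ S, H.connectedComponentMk ⟨w, h⟩ = c := by
    intro c w
    constructor
    · intro hw; exact (Finset.mem_filter.mp hw).2
    · rintro ⟨h, hc⟩; exact Finset.mem_filter.mpr ⟨h, ⟨h, hc⟩⟩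
  have hXsub : ∀ c, X c ⊆ Y := fun c => Finset.filter_subset _ _
  -- anticomplete for component sets
  have hXanti : ∀ c, Anticomplete G (X c) (Y \ X c) := by
    intro c a ha b hb hadj
    obtain ⟨hAS, hAc⟩ := (hmemX c a).mp ha
    have hbY := Finset.mem_sdiff.mp hb
    have hBS : b ∈ S := hbY.1
    apply hbY.2
    refine (hmemX c b).mpr ⟨hBS, ?_⟩
    have : H.Adj ⟨a, hAS⟩ ⟨b, hBS⟩ := by simpa [hHdef] using hadj
    exact (SimpleGraph.ConnectedComponent.sound this.symm.reachable).trans hAc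
  -- connectedness
  have hXconn : ∀ c, ConnSub G (X c) := by
    intro c
    obtain ⟨⟨r, hrS⟩, hr⟩ := c.exists_rep
    have hrX : r ∈ X c := (hmemX c r).mpr ⟨hrS, hr⟩
    unfold ConnSub
    rw [SimpleGraph.connected_iff]
    constructor
    · rintro ⟨a, ha⟩ ⟨b, hb⟩
      have ha' : a ∈ X c := by simpa using ha
      have hb' : b ∈ X c := by simpa using hb
      obtain ⟨hAS, hAc⟩ := (hmemX c a).mp ha'
      obtain ⟨hBS, hBc⟩ := (hmemX c b).mp hb'
      have hre : H.Reachable ⟨a, hAS⟩ ⟨b, hBS⟩ :=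
        SimpleGraph.ConnectedComponent.exact (hAc.trans hBc.symm)
      obtain ⟨p⟩ := hre
      -- map walk to G
      let f : H →g G := (SimpleGraph.Embedding.induce S).toHom
      have hsup : ∀ w ∈ (p.map f).support, w ∈ ((X c : Finset V) : Set V) := by
        intro w hw
        rw [SimpleGraph.Walk.support_map, List.mem_map] at hw
        obtain ⟨u, hu, rfl⟩ := hw
        have : H.connectedComponentMk u = c := (support_mk p u hu).trans hAc
        have : f u ∈ X c := (hmemX c (f u)).mpr ⟨u.2, by
          convert this using 2; rfl⟩
        simpa using this
      have := reach_of_walk (p.map f) hsup (by exact ha') (by exact hb')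
      convert this using 2 <;> rfl
    · exact ⟨⟨r, by simpa using hrX⟩⟩
  -- union over a set of components
  set U : Finset H.ConnectedComponent → Finset V :=
    fun D => Y.filter (fun w => ∃ h : w ∈ S, H.connectedComponentMk ⟨w, h⟩ ∈ D) with hUdef
  have hmemU : ∀ (D) (w : V), w ∈ U D ↔ ∃ h : w ∈ S, H.connectedComponentMk ⟨w, h⟩ ∈ D := by
    intro D w
    constructor
    · intro hw; exact (Finset.mem_filter.mp hw).2
    · rintro ⟨h, hc⟩; exact Finset.mem_filter.mpr ⟨h, ⟨h, hc⟩⟩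
  have hUsub : ∀ D, U D ⊆ Y := fun D => Finset.filter_subset _ _
  have hUuniv : U Finset.univ = Y := by
    ext w
    simp only [hmemU]
    exact ⟨fun ⟨h, _⟩ => h, fun h => ⟨h, Finset.mem_univ _⟩⟩
  have hUempty : U ∅ = ∅ := by
    ext w; simp [hmemU]
  have hUinsert : ∀ c D, U (insert c D) = X c ∪ U D := by
    intro c D; ext w
    simp only [hmemU, hmemX, Finset.mem_union, Finset.mem_insert]
    constructor
    · rintro ⟨h, hc | hd⟩
      · exact Or.inl ⟨h, hc⟩
      · exact Or.inr ⟨h, hd⟩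
    · rintro (⟨h, hc⟩ | ⟨h, hd⟩)
      · exact ⟨h, Or.inl hc⟩
      · exact ⟨h, Or.inr hd⟩
  have hXUdisj : ∀ c D, c ∉ D → Disjoint (X c) (U D) := by
    intro c D hcD
    rw [Finset.disjoint_left]
    intro w hw hw'
    obtain ⟨h, hc⟩ := (hmemX c w).mp hw
    obtain ⟨h', hd⟩ := (hmemU D w).mp hw'
    exact hcD (hc ▸ hd)
  have hUanti : ∀ D, Anticomplete G (U D) (Y \ U D) := by
    intro D a ha b hb hadj
    obtain ⟨hAS, hAd⟩ := (hmemU D a).mp ha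
    have hbY := Finset.mem_sdiff.mp hb
    have hBS : b ∈ S := hbY.1
    apply hbY.2
    refine (hmemU D b).mpr ⟨hBS, ?_⟩
    have : H.Adj ⟨a, hAS⟩ ⟨b, hBS⟩ := by simpa [hHdef] using hadj
    exact (SimpleGraph.ConnectedComponent.sound this.symm.reachable) ▸ hAd
  have hμ0 : ∀ A : Finset V, 0 ≤ μ A := fun A => h0 ▸ hmono ∅ A (Finset.empty_subset A)
  have hsdiff : ∀ A : Finset V, A ⊆ Y → μ Y ≤ μ A + μ (Y \ A) := by
    intro A hA
    have : A ∪ (Y \ A) = Y := Finset.union_sdiff_of_subset hA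
    calc μ Y = μ (A ∪ (Y \ A)) := by rw [this]
    _ ≤ μ A + μ (Y \ A) := hsub _ _ Finset.disjoint_sdiff
  by_cases hcase : ∃ c, μ (Y \ X c) < ε
  · obtain ⟨c, hc⟩ := hcase
    refine ⟨X c, hXsub c, ?_, hXconn c, hXanti c, ?_, hc⟩
    · obtain ⟨⟨r, hrS⟩, hr⟩ := c.exists_rep
      exact ⟨r, (hmemX c r).mpr ⟨hrS, hr⟩⟩
    · have := hsdiff (X c) (hXsub c)
      linarith
  · push_neg at hcase
    exfalso
    have hXsmall : ∀ c, μ (X c) < ε := by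
      intro c
      have := hanti (X c) (Y \ X c) Finset.disjoint_sdiff (hXanti c)
      rcases min_lt_iff.mp this with h | h
      · exact h
      · exact absurd h (not_lt.mpr (hcase c))
    -- minimal D with μ (U D) ≥ ε
    obtain ⟨D, hD, hDmin⟩ := Finset.exists_min_image
      (Finset.univ.filter (fun D => ε ≤ μ (U D))) Finset.card
      ⟨Finset.univ, Finset.mem_filter.mpr ⟨Finset.mem_univ _, by rw [hUuniv]; linarith⟩⟩
    have hDε : ε ≤ μ (U D) := (Finset.mem_filter.mp hD).2
    have hDne : D.Nonempty := by
      rcases D.eq_empty_or_nonempty with rfl | h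
      · rw [hUempty, h0] at hDε; linarith
      · exact h
    obtain ⟨c, hcD⟩ := hDne
    have herase : μ (U (D.erase c)) < ε := by
      by_contra h
      push_neg at h
      have hmem : D.erase c ∈ Finset.univ.filter (fun D => ε ≤ μ (U D)) :=
        Finset.mem_filter.mpr ⟨Finset.mem_univ _, h⟩
      have := hDmin _ hmem
      have := Finset.card_erase_lt_of_mem hcD
      omega
    have hUD2 : μ (U D) < 2 * ε := by
      have hins : U D = X c ∪ U (D.erase c) := by
        rw [← hUinsert, Finset.insert_erase hcD]
      have := hsub (X c) (U (D.erase c)) (hXUdisj c _ (Finset.notMem_erase c D))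
      rw [hins]
      have := hXsmall c
      linarith
    have hrest : ε ≤ μ (Y \ U D) := by
      have := hsdiff (U D) (hUsub D)
      linarith
    have := hanti (U D) (Y \ U D) Finset.disjoint_sdiff (hUanti D)
    rcases min_lt_iff.mp this with h | h <;> linarith
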